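/- The number of cyclic binary strings b_1 ... b_m (m ≥ 3, indices modulo m) containing neither two cyclically consecutive zeros nor three cyclically consecutive ones equals the m-th Perrin number Q_m, where Q_1 = 0, Q_2 = 2, Q_3 = 3, and Q_n = Q_{n-2} + Q_{n-3}. -/
import Mathlib


/-- The Perrin sequence with `perrin 1 = 0`, `perrin 2 = 2`, `perrin 3 = 3` and
`perrin n = perrin (n-2) + perrin (n-3)`. -/
def perrin : ℕ → ℕ
  | 0 => 3
  | 1 => 0
  | 2 => 2
  | 3 => 3
  | n + 4 => perrin (n + 2) + perrin (n + 1)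

namespace PerrinAux

abbrev S := Bool × Bool

def R (p q : S) : Prop :=
  p.2 = q.1 ∧ ¬(p.1 = false ∧ p.2 = false) ∧ ¬(q.1 = false ∧ q.2 = false) ∧
    ¬(p.1 = true ∧ p.2 = true ∧ q.2 = true)

instance (p q : S) : Decidable (R p q) := by unfold R; infer_instance

def W : ℕ → S → S → ℕ
  | 0, v, w => if v = w then 1 else 0
  | n+1, v, w => ∑ u : S, (if R v u then 1 else 0) * W n u w

abbrev Pth (n : ℕ) (v w : S) : Type :=
  {g : Fin (n+1) → S // g 0 = v ∧ g (Fin.last n) = w ∧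
    ∀ i : Fin n, R (g i.castSucc) (g i.succ)}

lemma card_sigma {ι : Type*} [Fintype ι] (f : ι → Type*) [∀ i, Fintype (f i)] :
    Nat.card (Σ i, f i) = ∑ i, Nat.card (f i) := by
  simp [Nat.card_eq_fintype_card]

lemma card_pth (n : ℕ) (v w : S) : Nat.card (Pth n v w) = W n v w := by
  induction n generalizing v w with
  | zero =>
    by_cases h : v = w
    · subst h
      have : Unique (Pth 0 v v) := by
        refine ⟨⟨⟨fun _ => v, rfl, rfl, fun i => i.elim0⟩⟩, ?_⟩
        rintro ⟨g, h0, _, _⟩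
        apply Subtype.ext
        funext i
        have hi : i = 0 := Fin.fin_one_eq_zero i
        show g i = v
        rw [hi, h0]
      simp [W, Nat.card_unique]
    · have : IsEmpty (Pth 0 v w) := by
        refine ⟨?_⟩
        rintro ⟨g, h0, hl, _⟩
        exact h (by rw [← h0, ← hl]; rfl)
      simp [W, h, Nat.card_of_isEmpty]
  | succ n ih =>
    have e1 : Pth (n+1) v w ≃ Σ u : S, {g : Pth (n+1) v w // g.1 1 = u} :=
      (Equiv.sigmaFiberEquiv (fun g : Pth (n+1) v w => g.1 1)).symm
    rw [Nat.card_congr e1, card_sigma]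
    show _ = W (n+1) v w
    rw [W]
    refine Finset.sum_congr rfl fun u _ => ?_
    by_cases h : R v u
    · have e2 : {g : Pth (n+1) v w // g.1 1 = u} ≃ Pth n u w := by
        refine ⟨fun g => ⟨fun i => g.1.1 i.succ, ?_, ?_, ?_⟩,
                fun g => ⟨⟨Fin.cases v g.1, ?_, ?_, ?_⟩, ?_⟩, ?_, ?_⟩
        · show g.1.1 (Fin.succ 0) = u
          have e : (0 : Fin (n+1)).succ = 1 := by ext; simp
          rw [e, g.2]
        · show g.1.1 (Fin.last n).succ = w
          rw [Fin.succ_last]; exact g.1.2.2.1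
        · intro i
          show R (g.1.1 i.castSucc.succ) (g.1.1 i.succ.succ)
          have := g.1.2.2.2 i.succ
          rwa [← Fin.succ_castSucc] at this
        · simp
        · show Fin.cases v g.1 (Fin.last (n+1)) = w
          have e : Fin.last (n+1) = (Fin.last n).succ := rfl
          rw [e, Fin.cases_succ]; exact g.2.2.1
        · intro i
          induction i using Fin.cases with
          | zero =>
            show R (Fin.cases v g.1 (Fin.castSucc 0)) (Fin.cases v g.1 (Fin.succ 0))
            rw [Fin.castSucc_zero, Fin.cases_zero, Fin.cases_succ, g.2.1]
            exact h
          | succ j =>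
            show R (Fin.cases v g.1 j.succ.castSucc) (Fin.cases v g.1 j.succ.succ)
            rw [← Fin.succ_castSucc, Fin.cases_succ, Fin.cases_succ]
            exact g.2.2.2 j
        · show Fin.cases v g.1 1 = u
          rw [show (1 : Fin (n+1+1)) = (0 : Fin (n+1)).succ from by ext; simp,
            Fin.cases_succ]
          exact g.2.1
        · intro g
          apply Subtype.ext; apply Subtype.ext
          funext i
          induction i using Fin.cases with
          | zero => simpa using g.1.2.1.symm
          | succ j => simp
        · intro g
          apply Subtype.ext
          funext i
          simp
      rw [Nat.card_congr e2, ih, if_pos h, one_mul]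
    · have : IsEmpty {g : Pth (n+1) v w // g.1 1 = u} := by
        refine ⟨?_⟩
        rintro ⟨⟨g, h0, hl, hc⟩, h1⟩
        have hg : g 1 = u := h1
        have := hc 0
        have e : (0 : Fin (n+1)).succ = 1 := by ext; simp
        rw [Fin.castSucc_zero, h0, e, hg] at this
        exact h this
      simp [Nat.card_of_isEmpty, if_neg h]

lemma W_add (a b : ℕ) (v w : S) : W (a + b) v w = ∑ u : S, W a v u * W b u w := by
  induction a generalizing v with
  | zero =>
    simp only [Nat.zero_add, W]
    rw [Finset.sum_congr rfl fun u _ => by rw [ite_mul, one_mul, zero_mul]]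
    simp [Finset.sum_ite_eq]
  | succ a ih =>
    rw [show a + 1 + b = (a + b) + 1 by omega, W]
    calc ∑ u : S, (if R v u then 1 else 0) * W (a + b) u w
        = ∑ u : S, ∑ x : S, (if R v u then 1 else 0) * (W a u x * W b x w) := by
          refine Finset.sum_congr rfl fun u _ => ?_
          rw [ih, Finset.mul_sum]
      _ = ∑ x : S, (∑ u : S, (if R v u then 1 else 0) * W a u x) * W b x w := by
          rw [Finset.sum_comm]
          refine Finset.sum_congr rfl fun x _ => ?_
          rw [Finset.sum_mul]
          exact Finset.sum_congr rfl fun u _ => by ring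
      _ = ∑ x : S, W (a + 1) v x * W b x w := by
          refine Finset.sum_congr rfl fun x _ => ?_
          rw [W]

lemma W4 : ∀ v w : S, W 4 v w = W 2 v w + W 1 v w := by decide

lemma W_rec (n : ℕ) (v w : S) : W (n + 4) v w = W (n + 2) v w + W (n + 1) v w := by
  rw [show n + 4 = 4 + n by omega, show n + 2 = 2 + n by omega, show n + 1 = 1 + n by omega,
    W_add, W_add, W_add, ← Finset.sum_add_distrib]
  refine Finset.sum_congr rfl fun u _ => ?_
  rw [W4, add_mul]

def T (n : ℕ) : ℕ := ∑ v : S, W n v v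

lemma T_rec (n : ℕ) : T (n + 4) = T (n + 2) + T (n + 1) := by
  unfold T
  rw [← Finset.sum_add_distrib]
  exact Finset.sum_congr rfl fun v _ => W_rec n v v

lemma T_eq : ∀ n, T (n+1) = perrin (n+1) ∧ T (n+2) = perrin (n+2) ∧ T (n+3) = perrin (n+3)
  | 0 => ⟨by decide, by decide, by decide⟩
  | n+1 => by
    obtain ⟨h1, h2, h3⟩ := T_eq n
    refine ⟨h2, h3, ?_⟩
    rw [show n+1+3 = n+4 by omega, T_rec, perrin, h2, h1]

lemma T_eq_perrin (n : ℕ) (hn : 1 ≤ n) : T n = perrin n := by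
  obtain ⟨k, rfl⟩ := Nat.exists_eq_add_of_le hn
  rw [Nat.add_comm]
  exact (T_eq k).1

def Cyc (m : ℕ) : Type := {s : ZMod m → S // ∀ i : ZMod m, R (s i) (s (i + 1))}

instance (m : ℕ) [NeZero m] : Fintype (Cyc m) := by unfold Cyc; infer_instance

def cycEquiv (m : ℕ) :
    {b : ZMod m → Bool //
      (∀ i : ZMod m, ¬(b i = false ∧ b (i + 1) = false)) ∧
      (∀ i : ZMod m, ¬(b i = true ∧ b (i + 1) = true ∧ b (i + 2) = true))} ≃ Cyc m where
  toFun b := ⟨fun i => (b.1 i, b.1 (i + 1)), by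
    intro i
    dsimp only
    refine ⟨rfl, b.2.1 i, b.2.1 (i + 1), ?_⟩
    have e : i + 1 + 1 = i + 2 := by ring
    rw [e]
    exact b.2.2 i⟩
  invFun s := ⟨fun i => (s.1 i).1, by
    constructor
    · intro i
      dsimp only
      have hR := s.2 i
      rw [← hR.1]
      exact hR.2.1
    · intro i
      dsimp only
      have hR := s.2 i
      have hR' := s.2 (i + 1)
      have e : i + 1 + 1 = i + 2 := by ring
      rw [e] at hR'
      rw [← hR.1, ← hR'.1]
      exact fun h => hR.2.2.2 ⟨h.1, hR.1 ▸ h.2.1, hR'.1 ▸ h.2.2⟩⟩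
  left_inv b := rfl
  right_inv s := by
    apply Subtype.ext
    funext i
    exact Prod.ext rfl ((s.2 i).1.symm)

def fibEquiv (m : ℕ) (hm : 3 ≤ m) (v : S) : {s : Cyc m // s.1 0 = v} ≃ Pth m v v := by
  haveI : NeZero m := ⟨by omega⟩
  refine ⟨fun s => ⟨fun i : Fin (m+1) => s.1.1 ((i : ℕ) : ZMod m), ?_, ?_, ?_⟩,
    fun g => ⟨⟨fun i : ZMod m => g.1 ⟨i.val, by have := ZMod.val_lt i; omega⟩, ?_⟩, ?_⟩,
    ?_, ?_⟩
  · simpa using s.2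
  · show s.1.1 (((Fin.last m : Fin (m+1)) : ℕ) : ZMod m) = v
    rw [Fin.val_last]
    simpa [ZMod.natCast_self] using s.2
  · intro i
    show R (s.1.1 (((i.castSucc : Fin (m+1)) : ℕ) : ZMod m))
         (s.1.1 (((i.succ : Fin (m+1)) : ℕ) : ZMod m))
    rw [Fin.coe_castSucc, Fin.val_succ]
    push_cast
    exact s.1.2 _
  · -- cyclic condition for invFun
    intro i
    dsimp only
    have h1 : (1 : ZMod m).val = 1 := by
      rw [ZMod.val_one_eq_one_mod, Nat.mod_eq_of_lt (by omega)]
    by_cases h : i.val + 1 < m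
    · have hv : (i + 1).val = i.val + 1 := by
        rw [ZMod.val_add, h1, Nat.mod_eq_of_lt h]
      have key := g.2.2.2 ⟨i.val, by omega⟩
      have e1 : (Fin.castSucc ⟨i.val, by omega⟩ : Fin (m+1)) =
          ⟨i.val, by have := ZMod.val_lt i; omega⟩ := rfl
      have e2 : (Fin.succ ⟨i.val, by omega⟩ : Fin (m+1)) =
          ⟨(i + 1).val, by have := ZMod.val_lt (i+1); omega⟩ := by
        ext; simp [hv]
      rw [e1, e2] at key
      exact key
    · have hival : i.val = m - 1 := by have := ZMod.val_lt i; omega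
      have hv : (i + 1).val = 0 := by
        rw [ZMod.val_add, h1, hival, show m - 1 + 1 = m by omega, Nat.mod_self]
      have key := g.2.2.2 ⟨m - 1, by omega⟩
      have e1 : (Fin.castSucc ⟨m - 1, by omega⟩ : Fin (m+1)) =
          ⟨i.val, by have := ZMod.val_lt i; omega⟩ := by ext; simp [hival]
      have e2 : (Fin.succ ⟨m - 1, by omega⟩ : Fin (m+1)) = Fin.last m := by
        ext; simp [Fin.val_last]; omega
      rw [e1, e2, g.2.2.1] at key
      have e3 : (g.1 ⟨(i + 1).val, by have := ZMod.val_lt (i+1); omega⟩ : S) = v := by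
        have e4 : (⟨(i + 1).val, by have := ZMod.val_lt (i+1); omega⟩ : Fin (m+1)) = 0 := by
          ext; simp [hv]
        rw [e4]; exact g.2.1
      rw [e3]
      exact key
  · show g.1 ⟨(0 : ZMod m).val, _⟩ = v
    have e : (⟨(0 : ZMod m).val, by have := ZMod.val_lt (0 : ZMod m); omega⟩ : Fin (m+1)) = 0 := by
      ext; simp
    rw [e]
    exact g.2.1
  · intro s
    apply Subtype.ext; apply Subtype.ext
    funext i
    show s.1.1 ((i.val : ℕ) : ZMod m) = s.1.1 i
    simp [ZMod.natCast_val, ZMod.cast_id]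
  · intro g
    apply Subtype.ext
    funext i
    show g.1 ⟨((i : ℕ) : ZMod m).val, _⟩ = g.1 i
    rcases Nat.lt_or_ge (i : ℕ) m with h | h
    · have e : (⟨((i : ℕ) : ZMod m).val,
          by have := ZMod.val_lt (((i : ℕ) : ZMod m)); omega⟩ : Fin (m+1)) = i := by
        ext; simp [ZMod.val_natCast, Nat.mod_eq_of_lt h]
      rw [e]
    · have hi : (i : ℕ) = m := by have := i.isLt; omega
      have e : (⟨((i : ℕ) : ZMod m).val, by have := ZMod.val_lt (((i : ℕ) : ZMod m)); omega⟩ :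
          Fin (m+1)) = 0 := by
        ext; simp [hi, ZMod.val_natCast]
      have e2 : i = Fin.last m := by ext; simp [hi, Fin.val_last]
      rw [e, e2, g.2.2.1]
      exact g.2.1

lemma card_cyc (m : ℕ) (hm : 3 ≤ m) : Nat.card (Cyc m) = T m := by
  haveI : NeZero m := ⟨by omega⟩
  rw [Nat.card_congr (Equiv.sigmaFiberEquiv (fun s : Cyc m => s.1 0)).symm, card_sigma]
  unfold T
  refine Finset.sum_congr rfl fun v _ => ?_
  rw [Nat.card_congr (fibEquiv m hm v), card_pth]

end PerrinAux

/-- The number of cyclic binary strings of length `m ≥ 3` (indices modulo `m`)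
containing neither two cyclically consecutive zeros nor three cyclically
consecutive ones equals the `m`-th Perrin number. -/
theorem stmt_3 (m : ℕ) (hm : 3 ≤ m) :
    Nat.card {b : ZMod m → Bool //
      (∀ i : ZMod m, ¬(b i = false ∧ b (i + 1) = false)) ∧
      (∀ i : ZMod m, ¬(b i = true ∧ b (i + 1) = true ∧ b (i + 2) = true))} =
    perrin m := by
  haveI : NeZero m := ⟨by omega⟩
  rw [Nat.card_congr (PerrinAux.cycEquiv m), PerrinAux.card_cyc m hm,
    PerrinAux.T_eq_perrin m (by omega)]
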